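/- Let φ : ℝⁿ → ℝ be a C² convex function with ‖∇φ(x)‖ < 1 for all x, whose graph S = {(φ(x), x)} ⊂ M^{n+1} is a complete Riemannian manifold in the induced metric, and suppose 0 is a minimum point of φ. If c(t) = (φ(x(t)), x(t)) is a geodesic of S with x(0) = 0, then t ↦ ‖x(t)‖² is a non-decreasing function (‖·‖ the Euclidean norm on ℝⁿ). -/

import Mathlib

open Set InnerProductSpace

section Aux

variable {E : Type*} [NormedAddCommGroup E] [InnerProductSpace ℝ E] [CompleteSpace E]

private lemma inner_gradient_apply (φ : E → ℝ) (y v : E) :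
    (inner ℝ (gradient φ y) v : ℝ) = fderiv ℝ φ y v := by
  show (inner ℝ ((toDual ℝ E).symm (fderiv ℝ φ y)) v : ℝ) = fderiv ℝ φ y v
  exact InnerProductSpace.toDual_symm_apply

/-- derivative of φ along the line s ↦ p + s • v -/
private lemma hasDerivAt_line (φ : E → ℝ) (hφ : Differentiable ℝ φ) (p v : E) (s : ℝ) :
    HasDerivAt (fun s : ℝ => φ (p + s • v)) (fderiv ℝ φ (p + s • v) v) s := by
  have hline : HasDerivAt (fun s : ℝ => p + s • v) v s := by
    simpa using ((hasDerivAt_id s).smul_const v).const_add p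
  exact (hφ (p + s • v)).hasFDerivAt.comp_hasDerivAt s hline

private lemma convexOn_line (φ : E → ℝ) (hconv : ConvexOn ℝ Set.univ φ) (p v : E) :
    ConvexOn ℝ Set.univ (fun s : ℝ => φ (p + s • v)) := by
  have h := hconv.comp_affineMap (AffineMap.lineMap p (p + v))
  have : (fun s : ℝ => φ (p + s • v)) = φ ∘ (AffineMap.lineMap p (p + v)) := by
    funext s
    simp [AffineMap.lineMap_apply, add_sub_cancel_left, add_comm]
  rw [this]
  simpa using h

private lemma monotone_deriv_nonneg {f : ℝ → ℝ} {d a : ℝ} (hm : Monotone f)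
    (hd : HasDerivAt f d a) : 0 ≤ d := by
  have h := hasDerivAt_iff_tendsto_slope.mp hd
  refine ge_of_tendsto h (Filter.Eventually.of_forall fun t => ?_)
  rw [slope_def_field]
  rcases le_total a t with h' | h'
  · exact div_nonneg (sub_nonneg.mpr (hm h')) (sub_nonneg.mpr h')
  · exact div_nonneg_iff.mpr (Or.inr ⟨sub_nonpos.mpr (hm h'), sub_nonpos.mpr h'⟩)

/-- first-order condition: for a convex function with minimum at 0, ⟨∇φ(p), p⟩ ≥ 0 -/
private lemma inner_gradient_nonneg (φ : E → ℝ) (hφ : ContDiff ℝ 2 φ)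
    (hconv : ConvexOn ℝ Set.univ φ) (hmin : ∀ y, φ 0 ≤ φ y) (p : E) :
    0 ≤ (inner ℝ (gradient φ p) p : ℝ) := by
  have hdφ : Differentiable ℝ φ := hφ.differentiable (by norm_num)
  have hc : ConvexOn ℝ Set.univ (fun s : ℝ => φ ((0 : E) + s • p)) :=
    convexOn_line φ hconv 0 p
  have hder : HasDerivAt (fun s : ℝ => φ ((0 : E) + s • p)) (fderiv ℝ φ ((0:E) + (1:ℝ) • p) p) 1 :=
    hasDerivAt_line φ hdφ 0 p 1
  have hslope := hc.slope_le_of_hasDerivAt (Set.mem_univ (0:ℝ)) (Set.mem_univ (1:ℝ))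
    one_pos hder
  have h1 : slope (fun s : ℝ => φ ((0 : E) + s • p)) 0 1 = φ p - φ 0 := by
    simp [slope_def_field]
  rw [h1] at hslope
  have h2 : ((0:E) + (1:ℝ) • p) = p := by simp
  rw [h2] at hslope
  rw [inner_gradient_apply]
  have := hmin p
  linarith

/-- second-order condition: the Hessian of a C² convex function is positive semidefinite -/
private lemma hessian_nonneg (φ : E → ℝ) (hφ : ContDiff ℝ 2 φ)
    (hconv : ConvexOn ℝ Set.univ φ) (p v : E) :
    0 ≤ (inner ℝ v ((fderiv ℝ (gradient φ) p) v) : ℝ) := by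
  have hdφ : Differentiable ℝ φ := hφ.differentiable (by norm_num)
  -- gradient φ is differentiable
  have hgd : Differentiable ℝ (gradient φ) := by
    have h1 : ContDiff ℝ 1 (fderiv ℝ φ) := hφ.fderiv_right (by norm_num)
    have : gradient φ = fun y => (toDual ℝ E).symm (fderiv ℝ φ y) := rfl
    rw [this]
    exact fun y => (((toDual ℝ E).symm.toContinuousLinearEquiv.differentiable).comp
      (h1.differentiable (by norm_num))) y
  set k : ℝ → ℝ := fun s => (inner ℝ (gradient φ (p + s • v)) v : ℝ) with hk
  -- k is the derivative of the convex function s ↦ φ(p + s • v), hence monotone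
  have hderiv : ∀ s, HasDerivAt (fun s : ℝ => φ (p + s • v)) (k s) s := by
    intro s
    rw [hk]
    simpa [inner_gradient_apply] using hasDerivAt_line φ hdφ p v s
  have hkmono : Monotone k := by
    have hmono := (convexOn_line φ hconv p v).monotoneOn_deriv
      (fun s _ => (hderiv s).differentiableAt)
    have : ∀ s, deriv (fun s : ℝ => φ (p + s • v)) s = k s := fun s => (hderiv s).deriv
    intro a b hab
    rw [← this a, ← this b]
    exact hmono (Set.mem_univ a) (Set.mem_univ b) hab
  -- k has derivative ⟨Hφ(p) v, v⟩ at 0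
  have hline : HasDerivAt (fun s : ℝ => p + s • v) v 0 := by
    simpa using ((hasDerivAt_id (0:ℝ)).smul_const v).const_add p
  have hgcomp : HasDerivAt (fun s : ℝ => gradient φ (p + s • v))
      ((fderiv ℝ (gradient φ) p) v) 0 := by
    have h0 : p + (0:ℝ) • v = p := by simp
    have := ((hgd (p + (0:ℝ) • v)).hasFDerivAt.comp_hasDerivAt 0 hline)
    rwa [h0] at this
  have hkd : HasDerivAt k ((inner ℝ ((fderiv ℝ (gradient φ) p) v) v : ℝ)) 0 := by
    have := hgcomp.inner ℝ (hasDerivAt_const (0:ℝ) v)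
    simpa [hk] using this
  have := monotone_deriv_nonneg hkmono hkd
  rwa [real_inner_comm]

end Aux

/-- Let `φ : ℝⁿ → ℝ` be a `C²` convex function with `‖∇φ‖ < 1` everywhere, whose graph
`S = {(φ(x), x)} ⊂ M^{n+1}` is a spacelike surface, with minimum point `0`.  If
`c(t) = (φ(x(t)), x(t))` is a geodesic of `S` with `x(0) = 0` — i.e. the horizontal
component satisfies the geodesic equation
`ẍ = [ẋᵀ(Hφ)ẋ / (1 - ‖∇φ‖²)^{3/2}]·∇φ` — then `t ↦ ‖x(t)‖²` is non-decreasing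
(for `t ≥ 0`). -/
theorem geodesic_on_convex_graph_moves_outward {n : ℕ}
    (φ : EuclideanSpace ℝ (Fin n) → ℝ)
    (hφ : ContDiff ℝ 2 φ) (hconv : ConvexOn ℝ Set.univ φ)
    (hgrad : ∀ y, ‖gradient φ y‖ < 1)
    (hmin : ∀ y, φ 0 ≤ φ y)
    (x x' x'' : ℝ → EuclideanSpace ℝ (Fin n))
    (hx' : ∀ t, HasDerivAt x (x' t) t)
    (hx'' : ∀ t, HasDerivAt x' (x'' t) t)
    (hgeo : ∀ t, x'' t =
      ((inner ℝ (x' t) ((fderiv ℝ (gradient φ) (x t)) (x' t)) : ℝ) /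
          (1 - ‖gradient φ (x t)‖ ^ 2) ^ ((3:ℝ)/2)) • gradient φ (x t))
    (hx0 : x 0 = 0) :
    MonotoneOn (fun t => ‖x t‖ ^ 2) (Set.Ici (0:ℝ)) := by
  set G : ℝ → ℝ := fun t => (inner ℝ (x t) (x' t) : ℝ) with hG
  have hGd : ∀ t, HasDerivAt G ((inner ℝ (x t) (x'' t) : ℝ) + (inner ℝ (x' t) (x' t) : ℝ)) t :=
    fun t => (hx' t).inner ℝ (hx'' t)
  -- the derivative of G is nonnegative
  have hGd_nonneg : ∀ t, 0 ≤ (inner ℝ (x t) (x'' t) : ℝ) + (inner ℝ (x' t) (x' t) : ℝ) := by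
    intro t
    have h1 : (0:ℝ) ≤ inner ℝ (x' t) (x' t) := real_inner_self_nonneg
    have h2 : (0:ℝ) ≤ inner ℝ (x t) (x'' t) := by
      rw [hgeo t, real_inner_smul_right]
      apply mul_nonneg
      · apply div_nonneg (hessian_nonneg φ hφ hconv (x t) (x' t))
        apply Real.rpow_nonneg
        nlinarith [hgrad (x t), norm_nonneg (gradient φ (x t))]
      · rw [real_inner_comm]
        exact inner_gradient_nonneg φ hφ hconv hmin (x t)
    linarith
  have hGmono : Monotone G := by
    apply monotone_of_deriv_nonneg (fun t => (hGd t).differentiableAt)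
    intro t
    rw [(hGd t).deriv]
    exact hGd_nonneg t
  have hG0 : G 0 = 0 := by simp [hG, hx0]
  have hGnonneg : ∀ t, 0 ≤ t → 0 ≤ G t := fun t ht => hG0 ▸ hGmono ht
  -- the squared norm function
  have hfun : (fun t => ‖x t‖ ^ 2) = fun t => (inner ℝ (x t) (x t) : ℝ) := by
    funext t
    rw [real_inner_self_eq_norm_sq]
  rw [hfun]
  have hFd : ∀ t, HasDerivAt (fun t => (inner ℝ (x t) (x t) : ℝ))
      ((inner ℝ (x t) (x' t) : ℝ) + (inner ℝ (x' t) (x t) : ℝ)) t :=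
    fun t => (hx' t).inner ℝ (hx' t)
  apply monotoneOn_of_deriv_nonneg (convex_Ici 0)
  · exact fun t _ => ((hFd t).continuousAt).continuousWithinAt
  · exact fun t _ => ((hFd t).differentiableAt).differentiableWithinAt
  · intro t ht
    rw [interior_Ici] at ht
    rw [(hFd t).deriv]
    have h' : (0:ℝ) ≤ inner ℝ (x t) (x' t) := hGnonneg t (le_of_lt ht)
    linarith [h', real_inner_comm (x t) (x' t)]
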